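/- Petridis's lemma: let A, S be finite non-empty subsets of a multiplicative group G with |A·S| ≤ α|A| for some real α. Then there exists a non-empty subset X ⊆ A such that |C·X·S| ≤ α|C·X| for all finite subsets C of G. -/

import Mathlib

open scoped Pointwise

open Finset in
private theorem petridis_aux {G : Type*} [Group G] [DecidableEq G] {X S : Finset G}
    (hX : ∀ X' ⊆ X, #(X * S) * #X' ≤ #(X' * S) * #X) (C : Finset G) :
    #(C * X * S) * #X ≤ #(X * S) * #(C * X) := by
  induction' C using Finset.induction_on with x C _ ih
  · simp
  set X' := X ∩ x⁻¹ • (C * X) with hX'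
  set C' := insert x C with hC'
  have h₀ : x • X' = x • X ∩ (C * X) := by
    rw [hX', smul_finset_inter, smul_inv_smul]
  have hsmul : ∀ Y : Finset G, {x} * Y * S = x • (Y * S) := by
    intro Y
    rw [mul_assoc, singleton_mul]
  have h₁ : C' * X * S = C * X * S ∪ (x • (X * S)) \ (x • (X' * S)) := by
    rw [hC', insert_eq, union_comm, union_mul, union_mul, hsmul]
    refine (sup_sdiff_eq_sup ?_).symm
    rw [← smul_mul_assoc, h₀]
    exact mul_subset_mul_right inter_subset_right
  have h₂ : x • (X' * S) ⊆ x • (X * S) :=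
    smul_finset_subset_smul_finset (mul_subset_mul_right inter_subset_left)
  have h₃ : #(C' * X * S) ≤ #(C * X * S) + #(X * S) - #(X' * S) := by
    rw [h₁]
    refine (card_union_le _ _).trans_eq ?_
    rw [card_sdiff_of_subset h₂, ← add_tsub_assoc_of_le (card_le_card h₂), card_smul_finset,
      card_smul_finset]
  refine (mul_le_mul_left h₃ _).trans ?_
  rw [tsub_mul, add_mul]
  refine (tsub_le_tsub (add_le_add_left ih _) <| hX _ inter_subset_left).trans_eq ?_
  have hcard : #(C' * X) = #(C * X) + #X - #X' := by
    have hsx : C' * X = C * X ∪ x • X := by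
      rw [hC', insert_eq, union_mul, union_comm, singleton_mul]
    have h4 : #(C * X ∪ x • X) + #X' = #(C * X) + #X := by
      rw [← card_smul_finset x X, ← card_smul_finset x X', h₀, inter_comm]
      exact card_union_add_card_inter _ _
    rw [hsx]
    omega
  rw [hcard, ← mul_add, ← mul_tsub]

theorem petridis {G : Type*} [Group G] [DecidableEq G]
    (A S : Finset G) (hA : A.Nonempty) (hS : S.Nonempty) (α : ℝ)
    (hAS : ((A * S).card : ℝ) ≤ α * A.card) :
    ∃ X ⊆ A, X.Nonempty ∧
      ∀ C : Finset G, ((C * X * S).card : ℝ) ≤ α * (C * X).card := by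
  classical
  obtain ⟨X, hXmem, hXmin⟩ := Finset.exists_min_image (A.powerset.erase ∅)
    (fun Y => ((Y * S).card : ℝ) / Y.card)
    ⟨A, Finset.mem_erase_of_ne_of_mem hA.ne_empty (Finset.mem_powerset_self A)⟩
  obtain ⟨hXne, hXA⟩ := Finset.mem_erase.1 hXmem
  rw [Finset.mem_powerset] at hXA
  have hXnonempty : X.Nonempty := Finset.nonempty_iff_ne_empty.2 hXne
  have hX0 : (0 : ℝ) < X.card := by exact_mod_cast hXnonempty.card_pos
  have hA0 : (0 : ℝ) < A.card := by exact_mod_cast hA.card_pos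
  refine ⟨X, hXA, hXnonempty, fun C => ?_⟩
  have hratio : ((X * S).card : ℝ) ≤ α * X.card := by
    have h1 : ((X * S).card : ℝ) / X.card ≤ ((A * S).card : ℝ) / A.card :=
      hXmin A (Finset.mem_erase_of_ne_of_mem hA.ne_empty (Finset.mem_powerset_self A))
    have h2 : ((A * S).card : ℝ) / A.card ≤ α := by
      rw [div_le_iff₀ hA0]; exact hAS
    calc ((X * S).card : ℝ) = ((X * S).card : ℝ) / X.card * X.card := by field_simp
    _ ≤ α * X.card := mul_le_mul_of_nonneg_right (h1.trans h2) hX0.le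
  have hmin : ∀ X' ⊆ X, (X * S).card * X'.card ≤ (X' * S).card * X.card := by
    intro X' hX'
    rcases X'.eq_empty_or_nonempty with rfl | hX'ne
    · simp
    have hX'0 : (0 : ℝ) < X'.card := by exact_mod_cast hX'ne.card_pos
    have := hXmin X' (Finset.mem_erase_of_ne_of_mem hX'ne.ne_empty
      (Finset.mem_powerset.2 (hX'.trans hXA)))
    rw [div_le_div_iff₀ hX0 hX'0] at this
    exact_mod_cast this
  have key := petridis_aux hmin C
  have key' : ((C * X * S).card : ℝ) * X.card ≤ (X * S).card * (C * X).card := by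
    exact_mod_cast key
  have : ((C * X * S).card : ℝ) * X.card ≤ α * (C * X).card * X.card := by
    calc ((C * X * S).card : ℝ) * X.card ≤ (X * S).card * (C * X).card := key'
    _ ≤ α * X.card * (C * X).card := by
        exact mul_le_mul_of_nonneg_right hratio (Nat.cast_nonneg _)
    _ = α * (C * X).card * X.card := by ring
  exact le_of_mul_le_mul_right this hX0
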